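/- Let m ≥ 3 be an odd integer and let 1/2 < H < 1. Then there exists a real polynomial Q (namely Q(x) = x³) such that the Hermite rank m′ of the composition Q ∘ He_m satisfies (2H−2)m′ + 1 > 0; in fact m′ = 1 and (2H−2)·1 + 1 = 2H − 1 > 0. -/

import Mathlib

open Polynomial MeasureTheory ProbabilityTheory Real
open scoped ENNReal NNReal

/-- The `n`-th probabilists' Hermite polynomial, with real coefficients. -/
noncomputable def hermiteR (n : ℕ) : Polynomial ℝ :=
  (Polynomial.hermite n).map (Int.castRingHom ℝ)

/-- The standard Gaussian measure `N(0,1)` on `ℝ`. -/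
noncomputable def stdGaussian : Measure ℝ := gaussianReal 0 1

/-- `F` has Hermite rank `m`: `m ≥ 1` is the smallest integer `k ≥ 1` such that
`∫ F(x) He_k(x) dγ(x) ≠ 0`, where `γ` is the standard Gaussian measure. -/
def HasHermiteRank (F : Polynomial ℝ) (m : ℕ) : Prop :=
  1 ≤ m ∧ (∫ x, F.eval x * (hermiteR m).eval x ∂stdGaussian) ≠ 0 ∧
    ∀ k, 1 ≤ k → k < m → (∫ x, F.eval x * (hermiteR k).eval x ∂stdGaussian) = 0

lemma integrable_pow_mul_gauss (n : ℕ) :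
    Integrable (fun x : ℝ => x ^ n * Real.exp (-(x ^ 2 / 2))) := by
  have h := integrable_rpow_mul_exp_neg_mul_sq (b := 1/2) (by norm_num)
    (s := (n : ℝ)) (by have := n.cast_nonneg (α := ℝ); linarith)
  have : (fun x : ℝ => x ^ (n:ℝ) * Real.exp (-(1/2) * x ^ 2))
      = fun x : ℝ => x ^ n * Real.exp (-(x ^ 2 / 2)) := by
    funext x
    rw [Real.rpow_natCast]
    ring_nf
  rwa [this] at h

lemma integrable_poly_mul_gauss (p : ℝ[X]) :
    Integrable (fun x : ℝ => p.eval x * Real.exp (-(x ^ 2 / 2))) := by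
  induction p using Polynomial.induction_on' with
  | add p q hp hq => simpa [add_mul, Pi.add_def] using hp.add hq
  | monomial n a =>
      simpa [Polynomial.eval_monomial, mul_assoc] using (integrable_pow_mul_gauss n).const_mul a

lemma stdGaussian_eq : _root_.stdGaussian
    = volume.withDensity (fun x => ((gaussianPDFReal 0 1 x).toNNReal : ℝ≥0∞)) := by
  rw [_root_.stdGaussian, gaussianReal_of_var_ne_zero _ one_ne_zero]
  rfl

lemma meas_pdf : Measurable (fun x => (gaussianPDFReal 0 1 x).toNNReal) :=
  (measurable_gaussianPDFReal 0 1).real_toNNReal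

lemma integral_stdGaussian (f : ℝ → ℝ) :
    ∫ x, f x ∂stdGaussian = ∫ x, gaussianPDFReal 0 1 x * f x := by
  rw [stdGaussian_eq, integral_withDensity_eq_integral_smul meas_pdf]
  congr 1; funext x
  simp [NNReal.smul_def, Real.coe_toNNReal _ (gaussianPDFReal_nonneg 0 1 x)]

lemma integrable_stdGaussian_iff (f : ℝ → ℝ) :
    Integrable f stdGaussian ↔ Integrable (fun x => gaussianPDFReal 0 1 x * f x) := by
  rw [stdGaussian_eq, integrable_withDensity_iff_integrable_smul meas_pdf]
  constructor <;> intro h <;> refine h.congr (Filter.Eventually.of_forall fun x => ?_) <;>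
    simp [NNReal.smul_def, Real.coe_toNNReal _ (gaussianPDFReal_nonneg 0 1 x)]

lemma pdf_eq (x : ℝ) : gaussianPDFReal 0 1 x = (√(2 * π))⁻¹ * Real.exp (-(x ^ 2 / 2)) := by
  rw [gaussianPDFReal]
  norm_num
  left; ring

lemma integrable_poly_stdGaussian (p : ℝ[X]) :
    Integrable (fun x => p.eval x) stdGaussian := by
  rw [integrable_stdGaussian_iff]
  have := (integrable_poly_mul_gauss p).const_mul (√(2 * π))⁻¹
  refine this.congr (Filter.Eventually.of_forall fun x => ?_)
  simp only [pdf_eq]; ring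

lemma integral_poly_stdGaussian (p : ℝ[X]) :
    ∫ x, p.eval x ∂stdGaussian = (√(2 * π))⁻¹ * ∫ x, p.eval x * Real.exp (-(x ^ 2 / 2)) := by
  rw [integral_stdGaussian, ← integral_const_mul]
  congr 1; funext x; rw [pdf_eq]; ring

/-- Integral of a polynomial against the standard Gaussian. -/
noncomputable def gint (p : ℝ[X]) : ℝ := ∫ x, p.eval x ∂stdGaussian

lemma gint_add (p q : ℝ[X]) : gint (p + q) = gint p + gint q := by
  simp only [gint, Polynomial.eval_add]
  exact integral_add (integrable_poly_stdGaussian p) (integrable_poly_stdGaussian q)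

lemma gint_sub (p q : ℝ[X]) : gint (p - q) = gint p - gint q := by
  simp only [gint, Polynomial.eval_sub]
  exact integral_sub (integrable_poly_stdGaussian p) (integrable_poly_stdGaussian q)

lemma gint_smul (c : ℝ) (p : ℝ[X]) : gint (c • p) = c * gint p := by
  simp [gint, ← integral_const_mul]

lemma gint_C (c : ℝ) : gint (Polynomial.C c) = c := by
  have : IsProbabilityMeasure stdGaussian := by
    rw [_root_.stdGaussian]; infer_instance
  simp [gint]

/-- Gaussian integration by parts for polynomials. -/
lemma gint_X_mul (p : ℝ[X]) : gint (Polynomial.X * p) = gint (Polynomial.derivative p) := by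
  rw [gint, gint, integral_poly_stdGaussian, integral_poly_stdGaussian]
  congr 1
  have hv : ∀ x : ℝ, HasDerivAt (fun y : ℝ => Real.exp (-(y ^ 2 / 2)))
      (-x * Real.exp (-(x ^ 2 / 2))) x := by
    intro x
    have h1 : HasDerivAt (fun y : ℝ => -(y ^ 2 / 2)) (-x) x := by
      have := ((hasDerivAt_id x).pow 2).div_const 2
      exact (this.neg).congr_deriv (by simp)
    simpa [mul_comm] using h1.exp
  have hu : ∀ x : ℝ, HasDerivAt (fun y : ℝ => p.eval y) ((Polynomial.derivative p).eval x) x :=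
    fun x => p.hasDerivAt x
  have key := integral_mul_deriv_eq_deriv_mul_of_integrable (fun x _ => hu x) (fun x _ => hv x) ?_ ?_ ?_
  · have : ∀ x : ℝ, p.eval x * (-x * Real.exp (-(x ^ 2 / 2)))
        = -((Polynomial.X * p).eval x * Real.exp (-(x ^ 2 / 2))) := by
      intro x; simp; ring
    rw [show (fun x : ℝ => p.eval x * (-x * Real.exp (-(x ^ 2 / 2))))
        = fun x => -((Polynomial.X * p).eval x * Real.exp (-(x ^ 2 / 2))) from funext this] at key
    rw [integral_neg] at key
    have := neg_injective key
    rw [this]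
  · have := integrable_poly_mul_gauss (Polynomial.X * p)
    refine (this.neg).congr (Filter.Eventually.of_forall fun x => ?_)
    simp [Pi.mul_apply]; ring
  · have := integrable_poly_mul_gauss (Polynomial.derivative p)
    exact this.congr (Filter.Eventually.of_forall fun x => rfl)
  · have := integrable_poly_mul_gauss p
    exact this.congr (Filter.Eventually.of_forall fun x => rfl)

lemma hermiteR_zero : hermiteR 0 = 1 := by simp [hermiteR]

lemma hermiteR_one : hermiteR 1 = Polynomial.X := by simp [hermiteR]

lemma hermiteR_succ (n : ℕ) : hermiteR (n + 1)
    = Polynomial.X * hermiteR n - Polynomial.derivative (hermiteR n) := by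
  simp only [hermiteR, Polynomial.hermite_succ, Polynomial.derivative_map, Polynomial.map_sub,
    Polynomial.map_mul, Polynomial.map_X]

lemma natDegree_hermiteR (n : ℕ) : (hermiteR n).natDegree = n := by
  have : ((hermite n).map (Int.castRingHom ℝ)).natDegree = (hermite n).natDegree :=
    Polynomial.natDegree_map_eq_of_injective (RingHom.injective_int _) _
  rw [hermiteR, this, Polynomial.natDegree_hermite]

lemma coeff_hermiteR_self (n : ℕ) : (hermiteR n).coeff n = 1 := by
  simp [hermiteR, Polynomial.coeff_hermite_self]

lemma derivative_hermiteR (n : ℕ) :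
    Polynomial.derivative (hermiteR n) = (n : ℝ) • hermiteR (n - 1) := by
  induction n with
  | zero => simp [hermiteR_zero]
  | succ n ih =>
      rw [hermiteR_succ, Polynomial.derivative_sub, Polynomial.derivative_mul,
        Polynomial.derivative_X, one_mul, ih]
      cases n with
      | zero => simp [hermiteR_zero, hermiteR_one]
      | succ k =>
          rw [Polynomial.derivative_smul]
          simp only [Nat.add_sub_cancel]
          have hk : Polynomial.derivative (hermiteR k)
              = Polynomial.X * hermiteR k - hermiteR (k + 1) := by
            rw [hermiteR_succ k]; ring
          rw [hk]
          simp only [Polynomial.smul_eq_C_mul]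
          push_cast [Polynomial.C_add, Polynomial.C_1]
          ring

/-- Key lemma: `∫ He_n · f dγ = ∫ f⁽ⁿ⁾ dγ`. -/
lemma gint_hermiteR_mul (n : ℕ) : ∀ f : ℝ[X],
    gint (hermiteR n * f) = gint (Polynomial.derivative^[n] f) := by
  induction n with
  | zero => intro f; simp [hermiteR_zero]
  | succ n ih =>
      intro f
      rw [hermiteR_succ, sub_mul, gint_sub, mul_assoc, gint_X_mul, Polynomial.derivative_mul]
      rw [gint_add, add_sub_cancel_left, ih, Function.iterate_succ_apply]

lemma iterate_derivative_self (p : ℝ[X]) (n : ℕ) (hd : p.natDegree ≤ n) :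
    Polynomial.derivative^[n] p = Polynomial.C ((Nat.factorial n : ℝ) * p.coeff n) := by
  have h0 : (Polynomial.derivative^[n] p).natDegree = 0 := by
    have := Polynomial.natDegree_iterate_derivative p n
    omega
  rw [Polynomial.eq_C_of_natDegree_eq_zero h0, Polynomial.coeff_iterate_derivative]
  simp [Nat.descFactorial_self, nsmul_eq_mul]

lemma gint_hermiteR_mul_hermiteR (a b : ℕ) :
    gint (hermiteR a * hermiteR b) = if a = b then (Nat.factorial a : ℝ) else 0 := by
  rcases lt_trichotomy a b with h | h | h
  · rw [mul_comm, gint_hermiteR_mul, Polynomial.iterate_derivative_eq_zero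
      (by rw [natDegree_hermiteR]; exact h), if_neg h.ne]
    simp [gint, Polynomial.eval_zero]
  · subst h
    rw [gint_hermiteR_mul, iterate_derivative_self _ _ (natDegree_hermiteR a).le,
      coeff_hermiteR_self, mul_one, gint_C, if_pos rfl]
  · rw [gint_hermiteR_mul, Polynomial.iterate_derivative_eq_zero
      (by rw [natDegree_hermiteR]; exact h), if_neg h.ne']
    simp [gint, Polynomial.eval_zero]

/-- `S a b j = ∫ (He_a He_b)⁽ʲ⁾ dγ`. -/
noncomputable def S (a b j : ℕ) : ℝ :=
  gint (Polynomial.derivative^[j] (hermiteR a * hermiteR b))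

lemma S_symm (a b j : ℕ) : S a b j = S b a j := by rw [S, S, mul_comm]

lemma S_zero (a b : ℕ) : S a b 0 = if a = b then (Nat.factorial a : ℝ) else 0 := by
  rw [S, Function.iterate_zero_apply, gint_hermiteR_mul_hermiteR]

lemma derivative_hermiteR_mul (a b : ℕ) :
    Polynomial.derivative (hermiteR a * hermiteR b)
      = (a : ℝ) • (hermiteR (a - 1) * hermiteR b) + (b : ℝ) • (hermiteR a * hermiteR (b - 1)) := by
  rw [Polynomial.derivative_mul, derivative_hermiteR, derivative_hermiteR,
    smul_mul_assoc, mul_smul_comm]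

lemma S_succ (a b j : ℕ) :
    S a b (j + 1) = (a : ℝ) * S (a - 1) b j + (b : ℝ) * S a (b - 1) j := by
  rw [S, Function.iterate_succ_apply, derivative_hermiteR_mul]
  rw [show Polynomial.derivative^[j]
      ((a : ℝ) • (hermiteR (a - 1) * hermiteR b) + (b : ℝ) • (hermiteR a * hermiteR (b - 1)))
      = (a : ℝ) • Polynomial.derivative^[j] (hermiteR (a - 1) * hermiteR b)
        + (b : ℝ) • Polynomial.derivative^[j] (hermiteR a * hermiteR (b - 1)) by
    induction j with
    | zero => simp
    | succ k ih =>
        rw [Function.iterate_succ_apply', ih, Polynomial.derivative_add,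
          Polynomial.derivative_smul, Polynomial.derivative_smul,
          Function.iterate_succ_apply', Function.iterate_succ_apply']]
  rw [gint_add, gint_smul, gint_smul, S, S]

lemma S_nonneg (j : ℕ) : ∀ a b, 0 ≤ S a b j := by
  induction j with
  | zero =>
      intro a b
      rw [S_zero]
      split <;> positivity
  | succ j ih =>
      intro a b
      rw [S_succ]
      have h1 := ih (a - 1) b
      have h2 := ih a (b - 1)
      positivity

lemma S_pos : ∀ j a b, b ≤ a + j → a ≤ b + j → j ≤ a + b → Even (a + b + j) → 0 < S a b j := by
  intro j
  induction j with
  | zero =>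
      intro a b hba hab _ _
      have : a = b := le_antisymm (by omega) (by omega)
      subst this
      rw [S_zero, if_pos rfl]
      positivity
  | succ j ih =>
      have key : ∀ a b, a ≤ b → b ≤ a + (j + 1) → a ≤ b + (j + 1) → j + 1 ≤ a + b →
          Even (a + b + (j + 1)) → 0 < S a b (j + 1) := by
        intro a b hab hba _ hj hpar
        have hb1 : 1 ≤ b := by
          rcases Nat.eq_zero_or_pos b with h | h
          · exfalso; omega
          · exact h
        have hchild : 0 < S a (b - 1) j := by
          apply ih
          · omega
          · -- a ≤ (b-1) + j
            rcases eq_or_lt_of_le hab with h | h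
            · subst h
              have hj1 : 1 ≤ j := by
                by_contra hc
                have : j = 0 := by omega
                subst this
                obtain ⟨c, hc⟩ := hpar
                omega
              omega
            · omega
          · omega
          · obtain ⟨c, hc⟩ := hpar
            exact ⟨c - 1, by omega⟩
        rw [S_succ]
        have h1 : 0 ≤ (a : ℝ) * S (a - 1) b j := by
          have := S_nonneg j (a - 1) b
          positivity
        have h2 : 0 < (b : ℝ) * S a (b - 1) j := by
          have : (0 : ℝ) < b := by exact_mod_cast hb1
          positivity
        linarith
      intro a b hba hab hj hpar
      rcases le_total a b with h | h
      · exact key a b h hba hab hj hpar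
      · rw [S_symm]
        exact key b a h hab hba (by omega) (by rwa [show b + a = a + b by omega])

lemma gint_main_pos (m : ℕ) (hm : 3 ≤ m) (hmo : Odd m) :
    0 < gint (hermiteR 1 * hermiteR m ^ 3) := by
  rw [gint_hermiteR_mul]
  have hder : Polynomial.derivative (hermiteR m ^ 3)
      = ((3 * m : ℕ) : ℝ) • (hermiteR (m - 1) * (hermiteR m * hermiteR m)) := by
    rw [Polynomial.derivative_pow, derivative_hermiteR]
    simp only [Polynomial.smul_eq_C_mul, map_mul, map_natCast]
    push_cast
    ring
  rw [Function.iterate_one, hder, gint_smul]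
  have hS : gint (hermiteR (m - 1) * (hermiteR m * hermiteR m)) = S m m (m - 1) := by
    rw [gint_hermiteR_mul, S]
  rw [hS]
  have hpos : 0 < S m m (m - 1) := by
    obtain ⟨t, ht⟩ := hmo
    apply S_pos
    · omega
    · omega
    · omega
    · exact ⟨3 * t + 1, by omega⟩
  have h3m : (0 : ℝ) < ((3 * m : ℕ) : ℝ) := by
    have : 0 < 3 * m := by omega
    exact_mod_cast this
  positivity


/-- For every odd `m ≥ 3` and every `1/2 < H < 1`, there exists a polynomial `Q`
(namely `Q(x) = x³`) such that the Hermite rank `m'` of `Q ∘ He_m` satisfies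
`(2H-2) m' + 1 > 0`; in fact `m' = 1` and `(2H-2)·1 + 1 = 2H - 1 > 0`. -/
theorem exists_Q_odd_case (m : ℕ) (hm : 3 ≤ m) (hmo : Odd m)
    (H : ℝ) (hH1 : 1 / 2 < H) (hH2 : H < 1) :
    ∃ (Q : Polynomial ℝ) (m' : ℕ), Q = Polynomial.X ^ 3 ∧ m' = 1 ∧
      HasHermiteRank (Q.comp (hermiteR m)) m' ∧
      (2 * H - 2) * (m' : ℝ) + 1 > 0 ∧ (2 * H - 2) * 1 + 1 = 2 * H - 1 ∧ 2 * H - 1 > 0 := by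
  refine ⟨Polynomial.X ^ 3, 1, rfl, rfl, ?_, by push_cast; linarith, by ring, by linarith⟩
  refine ⟨le_refl 1, ?_, fun k hk1 hk2 => absurd (lt_of_le_of_lt hk1 hk2) (lt_irrefl 1)⟩
  have heq : (∫ x, ((Polynomial.X ^ 3 : ℝ[X]).comp (hermiteR m)).eval x
      * (hermiteR 1).eval x ∂stdGaussian) = gint (hermiteR 1 * hermiteR m ^ 3) := by
    rw [gint]
    congr 1
    funext x
    rw [Polynomial.X_pow_comp, Polynomial.eval_mul, Polynomial.eval_pow]
    ring
  rw [heq]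
  exact (gint_main_pos m hm hmo).ne'
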